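/- Let g be a complex semisimple Lie algebra with Cartan subalgebra h and root system Δ, and let B = {H₁,...,H_ℓ} ∪ {X_α : α ∈ Δ} be a Chevalley basis. Then for each root α the divided powers X_α^n/n! preserve the Z-span of B under the adjoint action: (ad X_α)^n/n! maps g_Z into g_Z for all n ≥ 0. -/

import Mathlib

namespace Stmt7Aux

variable {g : Type*} [LieRing g] [LieAlgebra ℂ g] {ℓ : ℕ}

lemma sum_lie' {ι : Type*} (s : Finset ι) (f : ι → g) (y : g) :
    ⁅∑ i ∈ s, f i, y⁆ = ∑ i ∈ s, ⁅f i, y⁆ := by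
  induction s using Finset.cons_induction with
  | empty => simp
  | cons i s hi ih => simp [Finset.sum_cons, add_lie, ih]

/-- The string condition appearing in `hXX`. -/
def strcond (Δ : Finset (Fin ℓ → ℤ)) (α β : Fin ℓ → ℤ) (r : ℕ) : Prop :=
  (∀ j : ℕ, j ≤ r → β - j • α ∈ Δ) ∧ β - (r + 1) • α ∉ Δ

lemma zsmul_right_inj {α : Fin ℓ → ℤ} (hα : α ≠ 0) {k k' : ℤ}
    (h : k • α = k' • α) : k = k' := by
  obtain ⟨i, hi⟩ : ∃ i, α i ≠ 0 := by
    by_contra hcon; push_neg at hcon; exact hα (funext hcon)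
  have := congrFun h i
  simp only [Pi.smul_apply, smul_eq_mul] at this
  exact mul_right_cancel₀ hi this

lemma exists_strcond {Δ : Finset (Fin ℓ → ℤ)} {α β : Fin ℓ → ℤ}
    (hα : α ≠ 0) (hβ : β ∈ Δ) : ∃ r, strcond Δ α β r := by
  classical
  obtain ⟨i, hi⟩ : ∃ i, α i ≠ 0 := by
    by_contra hcon; push_neg at hcon; exact hα (funext hcon)
  have hex : ∃ j : ℕ, β - (j + 1) • α ∉ Δ := by
    by_contra hcon
    push_neg at hcon
    have hinj : Function.Injective (fun j : ℕ => β - (j + 1) • α) := by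
      intro a a' hh
      have h2 := congrFun hh i
      simp only [Pi.sub_apply, Pi.smul_apply, smul_eq_mul, nsmul_eq_mul, Pi.mul_apply,
        Pi.add_apply, Pi.natCast_apply, Pi.one_apply] at h2
      have h3 : ((a : ℤ) + 1) * α i = ((a' : ℤ) + 1) * α i := by push_cast at h2 ⊢; linarith
      have := mul_right_cancel₀ hi h3
      omega
    have : (Δ : Set (Fin ℓ → ℤ)).Infinite :=
      Set.infinite_of_injective_forall_mem hinj (fun j => hcon j)
    exact Δ.finite_toSet.not_infinite this
  refine ⟨Nat.find hex, ?_, ?_⟩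
  · intro j hj
    match j with
    | 0 => simpa using hβ
    | j + 1 =>
      have : ¬ (β - (j + 1) • α ∉ Δ) := Nat.find_min hex (by omega)
      simpa using this
  · exact Nat.find_spec hex

lemma strcond_unique {Δ : Finset (Fin ℓ → ℤ)} {α β : Fin ℓ → ℤ} {r r' : ℕ}
    (h : strcond Δ α β r) (h' : strcond Δ α β r') : r = r' := by
  by_contra hne
  rcases Nat.lt_or_ge r r' with hlt | hge
  · exact h.2 (h'.1 (r + 1) hlt)
  · exact h'.2 (h.1 (r' + 1) (lt_of_le_of_ne hge (Ne.symm hne)))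

section Main

variable {Δ : Finset (Fin ℓ → ℤ)} {H : Fin ℓ → g} {X : (Fin ℓ → ℤ) → g}

lemma X_ne_zero (b : Module.Basis (Fin ℓ ⊕ {α : Fin ℓ → ℤ // α ∈ Δ}) ℂ g)
    (hbX : ∀ α : {α : Fin ℓ → ℤ // α ∈ Δ}, b (Sum.inr α) = X α.1)
    {γ : Fin ℓ → ℤ} (hγ : γ ∈ Δ) : X γ ≠ 0 := by
  have := b.ne_zero (Sum.inr ⟨γ, hγ⟩)
  rwa [hbX ⟨γ, hγ⟩] at this

lemma coeff_eq (b : Module.Basis (Fin ℓ ⊕ {α : Fin ℓ → ℤ // α ∈ Δ}) ℂ g)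
    (hbX : ∀ α : {α : Fin ℓ → ℤ // α ∈ Δ}, b (Sum.inr α) = X α.1)
    {γ : Fin ℓ → ℤ} (hγ : γ ∈ Δ) {z z' : ℤ}
    (h : (z : ℂ) • X γ = (z' : ℂ) • X γ) : z = z' := by
  have h2 : ((z : ℂ) - (z' : ℂ)) • X γ = 0 := by rw [sub_smul, h, sub_self]
  rcases smul_eq_zero.mp h2 with h3 | h3
  · have : (z : ℂ) = (z' : ℂ) := by linear_combination h3
    exact_mod_cast this
  · exact absurd h3 (X_ne_zero b hbX hγ)

lemma no_multiple
    (b : Module.Basis (Fin ℓ ⊕ {α : Fin ℓ → ℤ // α ∈ Δ}) ℂ g)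
    (hbX : ∀ α : {α : Fin ℓ → ℤ // α ∈ Δ}, b (Sum.inr α) = X α.1)
    (h0 : (0 : Fin ℓ → ℤ) ∉ Δ)
    (hneg : ∀ α ∈ Δ, -α ∈ Δ)
    (hHX : ∀ i, ∀ α ∈ Δ, ⁅H i, X α⁆ = (α i : ℂ) • X α)
    (c : (Fin ℓ → ℤ) → (Fin ℓ → ℤ))
    (hcoroot : ∀ α ∈ Δ, ⁅X α, X (-α)⁆ = ∑ i, (c α i : ℂ) • H i)
    (hc2 : ∀ α ∈ Δ, (∑ i, c α i * α i) = 2)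
    (hXX : ∀ α ∈ Δ, ∀ β ∈ Δ, α + β ≠ 0 →
      ((α + β ∈ Δ → ∃ (ε : ℤ) (r : ℕ), (ε = 1 ∨ ε = -1)
          ∧ (∀ j : ℕ, j ≤ r → β - j • α ∈ Δ) ∧ β - (r + 1) • α ∉ Δ
          ∧ ⁅X α, X β⁆ = ((ε * (r + 1) : ℤ) : ℂ) • X (α + β))
        ∧ (α + β ∉ Δ → ⁅X α, X β⁆ = 0)))
    {α : Fin ℓ → ℤ} (hα : α ∈ Δ) :
    ∀ m : ℕ, 2 ≤ m → (-(m : ℤ)) • α ∉ Δ := by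
  have hαne : α ≠ 0 := fun h => h0 (h ▸ hα)
  have hnegα : -α ∈ Δ := hneg α hα
  -- step lemma
  have step : ∀ m : ℕ, 2 ≤ m → (-(m : ℤ)) • α ∈ Δ → (-((m : ℤ) + 1)) • α ∈ Δ := by
    intro m hm hA
    by_contra hB
    set A : Fin ℓ → ℤ := (-(m : ℤ)) • α with hAdef
    have hXA : X A ≠ 0 := X_ne_zero b hbX hA
    -- the second inner bracket vanishes
    have hinner2 : ⁅X (-α), X A⁆ = 0 := by
      have hsum : -α + A ≠ 0 := by
        intro h
        apply hαne
        have h1 : (-(1 : ℤ) + -(m : ℤ)) • α = (0 : ℤ) • α := by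
          linear_combination (norm := module) h
        have h2 := zsmul_right_inj hαne h1
        omega
      refine (hXX (-α) hnegα A hA hsum).2 ?_
      intro hmem
      apply hB
      have heqq : -α + A = (-((m : ℤ) + 1)) • α := by rw [hAdef]; module
      rwa [heqq] at hmem
    -- LHS bracket: [[X(-α), Xα], X A] = 2m • X A
    have hco : ⁅X (-α), X α⁆ = ∑ i, (c (-α) i : ℂ) • H i := by
      have := hcoroot (-α) hnegα
      rwa [neg_neg] at this
    have hLHS : ⁅⁅X (-α), X α⁆, X A⁆ = ((2 * m : ℤ) : ℂ) • X A := by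
      rw [hco, sum_lie']
      have hterm : ∀ i, ⁅(c (-α) i : ℂ) • H i, X A⁆ = ((c (-α) i * A i : ℤ) : ℂ) • X A := by
        intro i
        rw [smul_lie, hHX i A hA, smul_smul]
        push_cast
        ring_nf
      rw [Finset.sum_congr rfl (fun i _ => hterm i), ← Finset.sum_smul]
      have hsum : (∑ i, (c (-α) i * A i)) = 2 * m := by
        have h2 := hc2 (-α) hnegα
        have hterm2 : ∀ i, c (-α) i * A i = (m : ℤ) * (c (-α) i * (-α) i) := by
          intro i
          simp only [hAdef, Pi.smul_apply, smul_eq_mul, Pi.neg_apply]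
          ring
        rw [Finset.sum_congr rfl (fun i _ => hterm2 i), ← Finset.mul_sum, h2]
        ring
      congr 1
      rw [← hsum]
      push_cast
      rfl
    -- Jacobi identity
    have hjac := lie_lie (X (-α)) (X α) (X A)
    rw [hLHS, hinner2, lie_zero, sub_zero] at hjac
    -- analyze ⁅X α, X A⁆
    have hsumA : α + A ≠ 0 := by
      intro h
      have h1 : ((1 : ℤ) + -(m : ℤ)) • α = (0 : ℤ) • α := by
        linear_combination (norm := module) h
      have h2 := zsmul_right_inj hαne h1
      omega
    by_cases hcc : α + A ∈ Δ
    · obtain ⟨ε, r, hε, hstr1, hstr2, heq⟩ := (hXX α hα A hA hsumA).1 hcc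
      have hr0 : r = 0 := by
        by_contra hr
        apply hB
        have h1 : A - (1 : ℕ) • α ∈ Δ := hstr1 1 (by omega)
        have h2 : A - (1 : ℕ) • α = (-((m : ℤ) + 1)) • α := by rw [hAdef]; module
        rwa [h2] at h1
      subst hr0
      have hsum2 : -α + (α + A) ≠ 0 := by
        intro h
        have h2 : A = 0 := by linear_combination (norm := module) h
        exact h0 (h2 ▸ hA)
      have hmem2 : -α + (α + A) ∈ Δ := by
        have heq3 : -α + (α + A) = A := by module
        rw [heq3]; exact hA
      obtain ⟨ε₂, r₂, hε₂, hstr₂1, hstr₂2, heq₂⟩ := (hXX (-α) hnegα (α + A) hcc hsum2).1 hmem2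
      -- bound r₂
      have hr₂ : (r₂ : ℤ) ≤ (m : ℤ) - 2 := by
        by_contra hcon
        push_neg at hcon
        have h1 : α + A - (m - 1 : ℕ) • (-α) ∈ Δ := hstr₂1 (m - 1) (by omega)
        have h2 : α + A - (m - 1 : ℕ) • (-α) = 0 := by
          rw [hAdef, ← Nat.cast_smul_eq_nsmul ℤ]
          have hcast : ((m - 1 : ℕ) : ℤ) = (m : ℤ) - 1 := by omega
          rw [hcast]; module
        rw [h2] at h1
        exact h0 h1
      -- rewrite the Jacobi identity
      have heqA : -α + (α + A) = A := by module
      rw [heqA] at heq₂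
      rw [heq, lie_smul, heq₂, smul_smul] at hjac
      have hfin : (2 * (m : ℤ)) = (ε * (0 + 1)) * (ε₂ * (r₂ + 1)) := by
        apply coeff_eq b hbX hA
        push_cast at hjac ⊢
        convert hjac using 2 <;> push_cast <;> ring
      rcases hε with h | h <;> rcases hε₂ with h' | h' <;> subst h h' <;> omega
    · have h2 := (hXX α hα A hA hsumA).2 hcc
      rw [h2, lie_zero] at hjac
      have h4 : ((2 * m : ℤ) : ℂ) ≠ 0 := by
        have : (2 * m : ℤ) ≠ 0 := by omega
        exact_mod_cast this
      exact hXA ((smul_eq_zero.mp hjac).resolve_left h4)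
  -- iterate the step lemma to get infinitely many roots
  intro m hm hmem
  have hall : ∀ k : ℕ, (-((m + k : ℕ) : ℤ)) • α ∈ Δ := by
    intro k
    induction k with
    | zero => simpa using hmem
    | succ k ih =>
      have hstep := step (m + k) (by omega) ih
      have hsc : (-(((m + (k + 1) : ℕ)) : ℤ)) = -(((m + k : ℕ) : ℤ) + 1) := by
        push_cast; ring
      rw [hsc]
      exact hstep
  have hinj : Function.Injective (fun k : ℕ => (-((m + k : ℕ) : ℤ)) • α) := by
    intro a a' hh
    have := zsmul_right_inj hαne hh
    omega
  have : (Δ : Set (Fin ℓ → ℤ)).Infinite :=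
    Set.infinite_of_injective_forall_mem hinj (fun k => hall k)
  exact Δ.finite_toSet.not_infinite this


lemma chain
    (h0 : (0 : Fin ℓ → ℤ) ∉ Δ)
    (hXX : ∀ α ∈ Δ, ∀ β ∈ Δ, α + β ≠ 0 →
      ((α + β ∈ Δ → ∃ (ε : ℤ) (r : ℕ), (ε = 1 ∨ ε = -1)
          ∧ (∀ j : ℕ, j ≤ r → β - j • α ∈ Δ) ∧ β - (r + 1) • α ∉ Δ
          ∧ ⁅X α, X β⁆ = ((ε * (r + 1) : ℤ) : ℂ) • X (α + β))
        ∧ (α + β ∉ Δ → ⁅X α, X β⁆ = 0)))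
    {α β : Fin ℓ → ℤ} (hα : α ∈ Δ) (hβ : β ∈ Δ) (hβα : β ≠ -α)
    (hnm : ∀ m : ℕ, 2 ≤ m → (-(m : ℤ)) • α ∉ Δ) :
    ∀ n : ℕ, (((LieAlgebra.ad ℂ g (X α)) ^ n) (X β) = 0) ∨
      ∃ (ε : ℤ) (r : ℕ), (ε = 1 ∨ ε = -1) ∧ n ≤ r ∧ (β + n • α) ∈ Δ ∧
        strcond Δ α (β + n • α) r ∧
        ((LieAlgebra.ad ℂ g (X α)) ^ n) (X β)
          = ((ε * (r.descFactorial n) : ℤ) : ℂ) • X (β + n • α) := by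
  have hαne : α ≠ 0 := fun h => h0 (h ▸ hα)
  intro n
  induction n with
  | zero =>
    right
    obtain ⟨r, hr⟩ := exists_strcond hαne hβ
    have h00 : β + (0 : ℕ) • α = β := by simp
    refine ⟨1, r, Or.inl rfl, Nat.zero_le r, ?_, ?_, ?_⟩
    · rw [h00]; exact hβ
    · rw [h00]; exact hr
    · simp
  | succ n ih =>
    have hpow : ∀ v : g, ((LieAlgebra.ad ℂ g (X α)) ^ (n + 1)) v
        = (LieAlgebra.ad ℂ g (X α)) (((LieAlgebra.ad ℂ g (X α)) ^ n) v) := by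
      intro v; rw [pow_succ']; rfl
    rcases ih with hzero | ⟨ε, r, hε, hnr, hmem, hstr, heq⟩
    · left; rw [hpow, hzero, map_zero]
    · have hβn_ne : β + n • α ≠ -α := by
        intro h
        rcases Nat.eq_zero_or_pos n with hn | hn
        · subst hn; apply hβα; simpa using h
        · have hbeq : β = (-((n : ℤ) + 1)) • α := by
            linear_combination (norm := module) h
          refine hnm (n + 1) (by omega) ?_
          rw [show (-((n + 1 : ℕ) : ℤ)) = -((n : ℤ) + 1) by push_cast; ring, ← hbeq]
          exact hβ
      have hsum_ne : α + (β + n • α) ≠ 0 := fun h =>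
        hβn_ne (by linear_combination (norm := module) h)
      have harr : α + (β + n • α) = β + (n + 1) • α := by module
      by_cases hcc : α + (β + n • α) ∈ Δ
      · obtain ⟨ε', r'', hε', hstr1, hstr2, heq'⟩ := (hXX α hα _ hmem hsum_ne).1 hcc
        have hr'' : r'' = r := strcond_unique ⟨hstr1, hstr2⟩ hstr
        subst hr''
        right
        have hmem' : β + (n + 1) • α ∈ Δ := harr ▸ hcc
        refine ⟨ε * ε', r'' + 1, ?_, by omega, hmem', ?_, ?_⟩
        · rcases hε with h | h <;> rcases hε' with h' | h' <;> subst h h' <;> simp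
        · constructor
          · intro j hj
            match j with
            | 0 => simpa using hmem'
            | j + 1 =>
              have h1 := hstr.1 j (by omega)
              have h2 : β + (n + 1) • α - (j + 1) • α = β + n • α - j • α := by module
              rw [h2]; exact h1
          · have h2 : β + (n + 1) • α - ((r'' + 1) + 1) • α = β + n • α - (r'' + 1) • α := by
              module
            rw [h2]; exact hstr.2
        · rw [hpow, heq, map_smul, LieAlgebra.ad_apply, heq', smul_smul, harr]
          congr 1
          push_cast [Nat.succ_descFactorial_succ]
          ring
      · left
        rw [hpow, heq, map_smul, LieAlgebra.ad_apply,
          (hXX α hα _ hmem hsum_ne).2 hcc, smul_zero]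

end Main

end Stmt7Aux

/-- Let `g` be a complex semisimple Lie algebra with Chevalley basis
`B = {H₁,…,H_ℓ} ∪ {X_α : α ∈ Δ}` (encoded by its defining relations: roots `α`
recorded by their integer values `α(Hᵢ)`, `[Hᵢ,Hⱼ] = 0`, `[Hᵢ,X_α] = α(Hᵢ)X_α`,
`[X_α, X_{-α}] = H_α` an integral combination of the `Hᵢ` with `α(H_α) = 2`, and
`[X_α,X_β] = ±(r+1)X_{α+β}` with `r` the length of the `α`-string through `β`).
Then for each root `α` and all `n ≥ 0`, the divided power `(ad X_α)ⁿ/n!` maps the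
`ℤ`-span `g_ℤ` of `B` into itself. -/
theorem stmt7 {g : Type*} [LieRing g] [LieAlgebra ℂ g]
    {ℓ : ℕ} (Δ : Finset (Fin ℓ → ℤ))
    (H : Fin ℓ → g) (X : (Fin ℓ → ℤ) → g)
    (b : Module.Basis (Fin ℓ ⊕ {α : Fin ℓ → ℤ // α ∈ Δ}) ℂ g)
    (hbH : ∀ i, b (Sum.inl i) = H i)
    (hbX : ∀ α : {α : Fin ℓ → ℤ // α ∈ Δ}, b (Sum.inr α) = X α.1)
    (h0 : (0 : Fin ℓ → ℤ) ∉ Δ)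
    (hneg : ∀ α ∈ Δ, -α ∈ Δ)
    (hHH : ∀ i j, ⁅H i, H j⁆ = 0)
    (hHX : ∀ i, ∀ α ∈ Δ, ⁅H i, X α⁆ = (α i : ℂ) • X α)
    (c : (Fin ℓ → ℤ) → (Fin ℓ → ℤ))
    (hcoroot : ∀ α ∈ Δ, ⁅X α, X (-α)⁆ = ∑ i, (c α i : ℂ) • H i)
    (hc2 : ∀ α ∈ Δ, (∑ i, c α i * α i) = 2)
    (hXX : ∀ α ∈ Δ, ∀ β ∈ Δ, α + β ≠ 0 →
      ((α + β ∈ Δ → ∃ (ε : ℤ) (r : ℕ), (ε = 1 ∨ ε = -1)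
          ∧ (∀ j : ℕ, j ≤ r → β - j • α ∈ Δ) ∧ β - (r + 1) • α ∉ Δ
          ∧ ⁅X α, X β⁆ = ((ε * (r + 1) : ℤ) : ℂ) • X (α + β))
        ∧ (α + β ∉ Δ → ⁅X α, X β⁆ = 0))) :
    ∀ α ∈ Δ, ∀ n : ℕ,
      ∀ v ∈ Submodule.span ℤ (Set.range H ∪ X '' ((Δ : Finset (Fin ℓ → ℤ)) : Set (Fin ℓ → ℤ))),
        ∃ w ∈ Submodule.span ℤ (Set.range H ∪ X '' ((Δ : Finset (Fin ℓ → ℤ)) : Set (Fin ℓ → ℤ))),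
          ((LieAlgebra.ad ℂ g (X α)) ^ n) v = ((Nat.factorial n : ℕ) : ℂ) • w := by
  intro α hα n
  classical
  set S : Set g := Set.range H ∪ X '' ((Δ : Finset (Fin ℓ → ℤ)) : Set (Fin ℓ → ℤ)) with hS
  set T : Module.End ℂ g := LieAlgebra.ad ℂ g (X α) with hT
  have hαne : α ≠ 0 := fun h => h0 (h ▸ hα)
  have hnegα : -α ∈ Δ := hneg α hα
  have hnm := Stmt7Aux.no_multiple b hbX h0 hneg hHX c hcoroot hc2 hXX hα
  have hXmem : ∀ γ ∈ Δ, X γ ∈ Submodule.span ℤ S := fun γ hγ =>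
    Submodule.subset_span (Or.inr ⟨γ, hγ, rfl⟩)
  have hHmem : ∀ i, H i ∈ Submodule.span ℤ S := fun i =>
    Submodule.subset_span (Or.inl ⟨i, rfl⟩)
  have hTXα : T (X α) = 0 := by rw [hT, LieAlgebra.ad_apply]; exact lie_self _
  have hTH : ∀ i, T (H i) = ((-(α i) : ℤ) : ℂ) • X α := by
    intro i
    rw [hT, LieAlgebra.ad_apply, ← lie_skew, hHX i α hα]
    push_cast
    rw [neg_smul]
  -- generator cases
  have hgen : ∀ x ∈ S, ∃ w ∈ Submodule.span ℤ S,
      (T ^ n) x = ((Nat.factorial n : ℕ) : ℂ) • w := by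
    rintro x (⟨i, rfl⟩ | ⟨γ, hγ, rfl⟩)
    · -- generator H i
      match n with
      | 0 => exact ⟨H i, hHmem i, by simp⟩
      | 1 =>
        refine ⟨(-(α i) : ℤ) • X α, Submodule.smul_mem _ _ (hXmem α hα), ?_⟩
        rw [pow_one, hTH i]
        simp [Int.cast_smul_eq_zsmul]
      | (k + 2) =>
        refine ⟨0, Submodule.zero_mem _, ?_⟩
        have h2 : (T ^ (k + 2)) (H i) = (T ^ k) (T (T (H i))) := by
          rw [show k + 2 = k + 1 + 1 by ring, pow_succ, pow_succ]
          simp [Module.End.mul_apply]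
        rw [h2, hTH i, map_smul, hTXα, smul_zero, map_zero, smul_zero]
    · -- generator X γ
      by_cases hγα : γ = -α
      · subst hγα
        have h1 : T (X (-α)) = ∑ i, (c α i : ℂ) • H i := by
          rw [hT, LieAlgebra.ad_apply]; exact hcoroot α hα
        have h2 : T (∑ i, (c α i : ℂ) • H i) = ((-2 : ℤ) : ℂ) • X α := by
          rw [map_sum]
          have hterm : ∀ i, T ((c α i : ℂ) • H i)
              = ((c α i * -(α i) : ℤ) : ℂ) • X α := by
            intro i
            rw [map_smul, hTH i, smul_smul]
            push_cast
            ring_nf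
          rw [Finset.sum_congr rfl (fun i _ => hterm i), ← Finset.sum_smul]
          congr 1
          have hz : (∑ i, (c α i * -(α i))) = (-2 : ℤ) := by
            have h3 := hc2 α hα
            simp only [mul_neg]
            rw [Finset.sum_neg_distrib, h3]
          rw [← Int.cast_sum, hz]
        match n with
        | 0 => exact ⟨X (-α), hXmem _ hnegα, by simp⟩
        | 1 =>
          refine ⟨∑ i, c α i • H i, Submodule.sum_mem _
            (fun i _ => Submodule.smul_mem _ _ (hHmem i)), ?_⟩
          rw [pow_one, h1]
          simp only [Nat.factorial_one, Nat.cast_one, one_smul]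
          exact Finset.sum_congr rfl (fun i _ => (Int.cast_smul_eq_zsmul ℂ _ _))
        | 2 =>
          refine ⟨(-1 : ℤ) • X α, Submodule.smul_mem _ _ (hXmem α hα), ?_⟩
          have hp : (T ^ 2) (X (-α)) = T (T (X (-α))) := by
            rw [pow_two]; simp [Module.End.mul_apply]
          rw [hp, h1, h2, ← Int.cast_smul_eq_zsmul ℂ]
          rw [smul_smul]
          norm_num
        | (k + 3) =>
          refine ⟨0, Submodule.zero_mem _, ?_⟩
          have hp : (T ^ (k + 3)) (X (-α)) = (T ^ k) (T (T (T (X (-α))))) := by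
            rw [show k + 3 = k + 1 + 1 + 1 by ring, pow_succ, pow_succ, pow_succ]
            simp [Module.End.mul_apply]
          rw [hp, h1, h2, map_smul, hTXα, smul_zero, map_zero, smul_zero]
      · -- generic root γ, γ ≠ -α
        rcases Stmt7Aux.chain h0 hXX hα hγ hγα hnm n with hzero | ⟨ε, r, hε, hnr, hmem, hstr, heq⟩
        · exact ⟨0, Submodule.zero_mem _, by rw [hzero, smul_zero]⟩
        · have hdvd : (Nat.factorial n) ∣ r.descFactorial n :=
            Nat.factorial_dvd_descFactorial r n
          set z : ℤ := ε * ((r.descFactorial n / Nat.factorial n : ℕ) : ℤ) with hzdef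
          have hz : ((Nat.factorial n : ℕ) : ℤ) * z = ε * (r.descFactorial n : ℤ) := by
            have hd : (Nat.factorial n) * (r.descFactorial n / Nat.factorial n)
                = r.descFactorial n := Nat.mul_div_cancel' hdvd
            rw [hzdef]
            calc ((Nat.factorial n : ℕ) : ℤ) * (ε * ((r.descFactorial n / Nat.factorial n : ℕ) : ℤ))
                = ε * (((Nat.factorial n * (r.descFactorial n / Nat.factorial n) : ℕ) : ℤ)) := by
                  push_cast; ring
              _ = ε * (r.descFactorial n : ℤ) := by rw [hd]
          refine ⟨z • X (γ + n • α), Submodule.smul_mem _ _ (hXmem _ hmem), ?_⟩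
          rw [heq, ← Int.cast_smul_eq_zsmul ℂ z, smul_smul]
          congr 1
          exact_mod_cast hz.symm
  -- span induction
  intro v hv
  induction hv using Submodule.span_induction with
  | mem x hx => exact hgen x hx
  | zero => exact ⟨0, Submodule.zero_mem _, by simp⟩
  | add x y hx hy ihx ihy =>
    obtain ⟨w₁, hw₁, he₁⟩ := ihx
    obtain ⟨w₂, hw₂, he₂⟩ := ihy
    exact ⟨w₁ + w₂, Submodule.add_mem _ hw₁ hw₂, by rw [map_add, he₁, he₂, smul_add]⟩
  | smul m x hx ihx =>
    obtain ⟨w, hw, he⟩ := ihx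
    refine ⟨m • w, Submodule.smul_mem _ _ hw, ?_⟩
    rw [map_zsmul, he, smul_comm]
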